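/- Let L be any modal logic with Cl ⊆ L ⊆ GL.3, closed under substitution. With β'_k built from the single variable p (δ'₀ = □⊥, δ'_{n+1} = ◇δ'_n, α'_n = δ'_n ∧ ¬δ'_{n+1}, β'_n = ◇(p ∧ α'_n)), let s' substitute β'_k for p_k. Then for every modality-free classical formula φ: φ is a classical tautology iff s'(φ) ∈ L. Hence classical satisfiability reduces to L-satisfiability of one-variable modal formulas. -/

import Mathlib

inductive MF : Type
  | var : ℕ → MF
  | bot : MF
  | imp : MF → MF → MF
  | box : MF → MF

def MF.neg (a : MF) : MF := a.imp .bot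
def MF.top : MF := MF.neg .bot
def MF.and (a b : MF) : MF := (a.imp b.neg).neg
def MF.or (a b : MF) : MF := a.neg.imp b
def MF.iff (a b : MF) : MF := (a.imp b).and (b.imp a)
def MF.dia (a : MF) : MF := (MF.box a.neg).neg
def MF.boxPlus (a : MF) : MF := a.and a.box

/-- Standard Kripke semantics. -/
def sat {W : Type} (R : W → W → Prop) (V : ℕ → W → Prop) : W → MF → Prop
  | w, .var n => V n w
  | _, .bot => False
  | w, .imp a b => sat R V w a → sat R V w b
  | w, .box a => ∀ u, R w u → sat R V u a

/-- Modality-free (purely classical) formulas. -/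
def MF.boxFree : MF → Prop
  | .var _ => True
  | .bot => True
  | .imp a b => a.boxFree ∧ b.boxFree
  | .box _ => False

/-- Variable-free formulas. -/
def MF.varFree : MF → Prop
  | .var _ => False
  | .bot => True
  | .imp a b => a.varFree ∧ b.varFree
  | .box a => a.varFree

/-- Classical Boolean evaluation (the `box` case is irrelevant: used on box-free formulas). -/
def evalb (v : ℕ → Bool) : MF → Bool
  | .var n => v n
  | .bot => false
  | .imp a b => !(evalb v a) || evalb v b
  | .box _ => false

/-- Classical propositional logic: modality-free tautologies. -/
def Cl : Set MF := {φ | φ.boxFree ∧ ∀ v : ℕ → Bool, evalb v φ = true}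

/-- Uniform substitution. -/
def subst (s : ℕ → MF) : MF → MF
  | .var n => s n
  | .bot => .bot
  | .imp a b => .imp (subst s a) (subst s b)
  | .box a => .box (subst s a)

def boxIter : ℕ → MF → MF
  | 0, a => a
  | n+1, a => .box (boxIter n a)

/-- The minimal normal modal logic K (semantically: validity in all Kripke frames). -/
def Ksem : Set MF := {φ | ∀ (W : Type) (R : W → W → Prop) (V : ℕ → W → Prop) (w : W), sat R V w φ}

def pv : MF := .var 0
def qv : MF := .var 1

def delta : ℕ → MF
  | 0 => qv.box
  | n+1 => qv.and ((qv.neg.and (delta n).dia).dia)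
def alpha (n : ℕ) : MF := (delta n).and (delta (n+1)).neg
def beta (n : ℕ) : MF := (pv.and (alpha n)).dia

def delta' : ℕ → MF
  | 0 => MF.bot.box
  | n+1 => (delta' n).dia
def alpha' (n : ℕ) : MF := (delta' n).and (delta' (n+1)).neg
def beta' (n : ℕ) : MF := (pv.and (alpha' n)).dia

def alpha'' (n : ℕ) : MF := ((MF.top.dia.boxPlus).dia).and ((delta' n).and (delta' (n+1)).neg)
def beta'' (n : ℕ) : MF := (alpha'' n).dia

def grzAx : MF := ((((pv.imp pv.box).box).imp pv).box).imp pv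
def lin3Ax : MF := (((pv.box).imp qv).box).or (((qv.box).imp pv).box)
def loebAx : MF := (((pv.box).imp pv).box).imp pv.box
def lin3'Ax : MF := (((pv.box).imp qv).box).or (((qv.boxPlus).imp pv).box)

/-- The frame ⟨ω ∪ {ω}, ≥⟩ : worlds are `ℕ∞`, `x R y` iff `x ≥ y`. -/
def Rge (x y : ℕ∞) : Prop := y ≤ x
/-- The frame ⟨ω ∪ {ω}, >⟩ : worlds are `ℕ∞`, `x R y` iff `x > y`. -/
def Rgt (x y : ℕ∞) : Prop := y < x

/-- Raw worlds of the frame F''. -/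
inductive CW : Type
  | root : CW
  | sink : CW
  | chain : ℕ → ℕ → CW

def CW.valid : CW → Prop
  | .chain k m => 1 ≤ k ∧ m ≤ k
  | _ => True

/-- Worlds of F'': `w`, `w*`, and `w^k_m` for `k ≥ 1`, `0 ≤ m ≤ k`. -/
def W'' : Type := {x : CW // x.valid}

/-- The accessibility relation of F'' (depending on the Boolean valuation `v`):
`w` sees `w*` and every `w^k_m` with `m ≥ 1`, but sees `w^k_0` only if `v k = true`;
`w^k_m R w^k_{m+1}`; `w^k_0 R w*`; `w*` has no successors. -/
def Rc (v : ℕ → Bool) : CW → CW → Prop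
  | .root, .sink => True
  | .root, .chain k m => 1 ≤ m ∨ v k = true
  | .chain k m, .chain k' m' => k' = k ∧ m' = m + 1
  | .chain _ m, .sink => m = 0
  | _, _ => False

def Rf (v : ℕ → Bool) (x y : W'') : Prop := Rc v x.val y.val

def wRoot : W'' := ⟨CW.root, trivial⟩
def wSink : W'' := ⟨CW.sink, trivial⟩
def wChain (k m : ℕ) (h : 1 ≤ k ∧ m ≤ k) : W'' := ⟨CW.chain k m, h⟩

/-- GL.3, semantically: the logic of transitive, converse well-founded strict linear orders. -/
def GL3sem : Set MF := {φ | ∀ (W : Type) (R : W → W → Prop),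
  Transitive R → (¬ ∃ f : ℕ → W, ∀ i, R (f i) (f (i + 1))) →
  (∀ x y, R x y ∨ x = y ∨ R y x) →
  ∀ (V : ℕ → W → Prop) (w : W), sat R V w φ}


lemma sat_dia {W : Type} (R : W → W → Prop) (V : ℕ → W → Prop) (w : W) (a : MF) :
    sat R V w (MF.dia a) ↔ ∃ u, R w u ∧ sat R V u a := by
  simp [MF.dia, MF.neg, sat]

lemma sat_and {W : Type} (R : W → W → Prop) (V : ℕ → W → Prop) (w : W) (a b : MF) :
    sat R V w (MF.and a b) ↔ sat R V w a ∧ sat R V w b := by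
  simp only [MF.and, MF.neg, sat]
  tauto

lemma sat_neg {W : Type} (R : W → W → Prop) (V : ℕ → W → Prop) (w : W) (a : MF) :
    sat R V w (MF.neg a) ↔ ¬ sat R V w a := by
  simp [MF.neg, sat]

lemma sat_delta'_zero (V : ℕ → ℕ∞ → Prop) (x : ℕ∞) :
    sat Rgt V x (delta' 0) ↔ x = 0 := by
  show (∀ u, Rgt x u → sat Rgt V u MF.bot) ↔ _
  simp only [sat, Rgt]
  constructor
  · intro h
    by_contra hx
    exact h 0 (pos_iff_ne_zero.mpr hx)
  · rintro rfl u hu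
    exact absurd hu (not_lt_bot)

lemma sat_delta'_succ (V : ℕ → ℕ∞ → Prop) (n : ℕ) (x : ℕ∞) :
    sat Rgt V x (delta' (n+1)) ↔ (n : ℕ∞) < x := by
  induction n generalizing x with
  | zero =>
    rw [show delta' 1 = (delta' 0).dia from rfl, sat_dia]
    constructor
    · rintro ⟨u, hu, hs⟩
      rw [sat_delta'_zero] at hs
      subst hs
      simpa [Rgt] using hu
    · intro h
      exact ⟨0, by simpa [Rgt] using h, (sat_delta'_zero V 0).mpr rfl⟩
  | succ n ih =>
    rw [show delta' (n+2) = (delta' (n+1)).dia from rfl, sat_dia]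
    constructor
    · rintro ⟨u, hu, hs⟩
      rw [ih] at hs
      calc ((n:ℕ∞) + 1) ≤ u := ENat.add_one_le_iff (by simp) |>.mpr hs
        _ < x := hu
    · intro h
      refine ⟨(n:ℕ∞) + 1, ?_, ?_⟩
      · show (n:ℕ∞) + 1 < x
        have : ((n+1 : ℕ) : ℕ∞) < x := by exact_mod_cast h
        simpa using this
      · rw [ih]
        exact ENat.lt_add_one_iff (by simp) |>.mpr le_rfl

lemma sat_alpha' (V : ℕ → ℕ∞ → Prop) (n : ℕ) (x : ℕ∞) :
    sat Rgt V x (alpha' n) ↔ x = (n : ℕ∞) := by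
  rw [alpha', sat_and, sat_neg, sat_delta'_succ]
  cases n with
  | zero =>
    rw [sat_delta'_zero]
    constructor
    · rintro ⟨rfl, _⟩; rfl
    · rintro rfl; simp
  | succ n =>
    rw [sat_delta'_succ]
    constructor
    · rintro ⟨h1, h2⟩
      push_neg at h2
      refine le_antisymm ?_ ?_
      · have : ((n+1 : ℕ) : ℕ∞) = (n:ℕ∞) + 1 := by push_cast; ring
        rw [this] at h2 ⊢
        exact h2
      · have : ((n+1 : ℕ) : ℕ∞) = (n:ℕ∞) + 1 := by push_cast; ring
        rw [this]
        exact ENat.add_one_le_iff (by simp) |>.mpr h1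
    · rintro rfl
      constructor
      · have : ((n+1 : ℕ) : ℕ∞) = (n:ℕ∞) + 1 := by push_cast; ring
        rw [this]
        exact lt_of_lt_of_le (by simp [ENat.lt_add_one_iff]) (le_refl _)
      · push_neg
        have : ((n+1 : ℕ) : ℕ∞) = (n:ℕ∞) + 1 := by push_cast; ring
        rw [this]

lemma sat_beta'_top (v : ℕ → Bool) (k : ℕ) :
    sat Rgt (fun _ x => ∃ j : ℕ, x = (j : ℕ∞) ∧ v j = true) ⊤ (beta' k) ↔ v k = true := by
  rw [beta', sat_dia]
  constructor
  · rintro ⟨u, hu, hs⟩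
    rw [sat_and] at hs
    obtain ⟨hp, ha⟩ := hs
    rw [sat_alpha'] at ha
    subst ha
    obtain ⟨j, hj, hvj⟩ := hp
    have : j = k := by exact_mod_cast hj.symm
    rwa [this] at hvj
  · intro h
    refine ⟨(k : ℕ∞), ?_, ?_⟩
    · show (k : ℕ∞) < ⊤
      exact lt_top_iff_ne_top.mpr (by simp)
    · rw [sat_and, sat_alpha']
      exact ⟨⟨k, rfl, h⟩, rfl⟩

lemma sat_subst_top (v : ℕ → Bool) (φ : MF) (hφ : φ.boxFree) :
    sat Rgt (fun _ x => ∃ j : ℕ, x = (j : ℕ∞) ∧ v j = true) ⊤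
      (subst (fun k => beta' k) φ) ↔ evalb v φ = true := by
  induction φ with
  | var n => exact sat_beta'_top v n
  | bot => simp [subst, sat, evalb]
  | imp a b iha ihb =>
    obtain ⟨ha, hb⟩ := hφ
    show (sat _ _ _ _ → sat _ _ _ _) ↔ _
    rw [iha ha, ihb hb]
    simp only [evalb, Bool.or_eq_true, Bool.not_eq_true']
    cases evalb v a <;> simp
  | box a ih => exact absurd hφ (by simp [MF.boxFree])

/-- for Cl ⊆ L ⊆ GL.3 closed under substitution, a modality-free φ is a
classical tautology iff its substitution instance (p_k ↦ β'_k, one-variable formulas)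
belongs to L. -/
theorem taut_iff_subst_beta'_mem (L : Set MF)
    (hsub : ∀ (φ : MF) (s : ℕ → MF), φ ∈ L → subst s φ ∈ L)
    (hCl : Cl ⊆ L) (hG : L ⊆ GL3sem) :
    ∀ φ : MF, φ.boxFree → (φ ∈ Cl ↔ subst (fun k => beta' k) φ ∈ L) := by
  intro φ hφ
  constructor
  · intro h
    exact hsub φ _ (hCl h)
  · intro h
    refine ⟨hφ, fun v => ?_⟩
    have hG3 := hG h
    have hsat := hG3 ℕ∞ Rgt
      (fun x y z hxy hyz => lt_trans hyz hxy)
      (by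
        rintro ⟨f, hf⟩
        have : ∀ i, f (i+1) < f i := hf
        exact (RelEmbedding.natGT f this).not_wellFounded wellFounded_lt)
      (fun x y => by rcases lt_trichotomy x y with h1 | h1 | h1
                     · exact Or.inr (Or.inr h1)
                     · exact Or.inr (Or.inl h1)
                     · exact Or.inl h1)
      (fun _ x => ∃ j : ℕ, x = (j : ℕ∞) ∧ v j = true) ⊤
    exact (sat_subst_top v φ hφ).mp hsat
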